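/- Let r and s be rational numbers, and assume that it is NOT the case that there exists a positive integer m with r = 1/m and m·s ∈ ℤ (i.e., it is not true that r is the reciprocal of a positive integer with s/r an integer). Then there exists a constant c > 0, depending only on r and s, such that for all positive integers q and y, if r + s·q is an integer and (r + s·q)·y ≡ 1 (mod q), then y ≥ c·q. -/

import Mathlib

/-- **Lemma (inverses of `r + sq` mod `q` are large).** Let `r, s ∈ ℚ`, and assume it is not
the case that `r` is the reciprocal of a positive integer `m` with `m·s ∈ ℤ` (i.e. with
`s/r ∈ ℤ`). Then there is a constant `c > 0`, depending only on `r` and `s`, such that for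
all positive integers `q` and `y`: if `r + s·q` is an integer `k` and `k·y ≡ 1 (mod q)`,
then `y ≥ c·q`. -/
theorem inverse_is_big (r s : ℚ)
    (h : ¬ ∃ m : ℕ, 0 < m ∧ r = 1 / (m : ℚ) ∧ ∃ k : ℤ, (m : ℚ) * s = (k : ℚ)) :
    ∃ c : ℝ, 0 < c ∧ ∀ q y : ℕ, 0 < q → 0 < y →
      ∀ k : ℤ, r + s * (q : ℚ) = (k : ℚ) → k * (y : ℤ) ≡ 1 [ZMOD (q : ℤ)] →
        c * q ≤ (y : ℝ) := by
  set a : ℤ := r.num with ha_def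
  set b : ℤ := (r.den : ℤ) with hb_def
  set u : ℤ := s.num with hu_def
  set v : ℤ := (s.den : ℤ) with hv_def
  have hb_pos : 0 < b := hb_def ▸ Int.natCast_pos.mpr r.pos
  have hv_pos : 0 < v := hv_def ▸ Int.natCast_pos.mpr s.pos
  have hC_pos : (0:ℝ) < ((|a| : ℝ) + b) * v := by
    have h1 : (0:ℝ) < (b:ℝ) := by exact_mod_cast hb_pos
    have h2 : (0:ℝ) < (v:ℝ) := by exact_mod_cast hv_pos
    have h3 : (0:ℝ) ≤ (|a| : ℝ) := by positivity
    nlinarith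
  refine ⟨(((|a| : ℝ) + b) * v)⁻¹, by positivity, ?_⟩
  intro q y hq hy k hk hmod
  obtain ⟨t, ht⟩ := hmod.symm.dvd
  -- ht : k * y - 1 = q * t
  have hq0 : (q:ℚ) ≠ 0 := Nat.cast_ne_zero.mpr hq.ne'
  have hbQ : (b:ℚ) ≠ 0 := by
    have : (0:ℚ) < (b:ℚ) := by exact_mod_cast hb_pos
    exact this.ne'
  have hvQ : (v:ℚ) ≠ 0 := by
    have : (0:ℚ) < (v:ℚ) := by exact_mod_cast hv_pos
    exact this.ne'
  have hA : (a:ℚ) = r * b := by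
    rw [ha_def, hb_def]
    push_cast
    field_simp [Rat.num_div_den]
    exact (Rat.mul_den_eq_num r).symm
  have hU : (u:ℚ) = s * v := by
    rw [hu_def, hv_def]
    push_cast
    field_simp [Rat.num_div_den]
    exact (Rat.mul_den_eq_num s).symm
  have htQ : (k:ℚ) * y - 1 = q * t := by exact_mod_cast congrArg (Int.cast : ℤ → ℚ) ht
  have key : a * v * (y:ℤ) - b * v = q * (t * b * v - u * b * y) := by
    have keyQ : (a:ℚ) * v * (y:ℕ) - b * v = (q:ℕ) * ((t:ℚ) * b * v - u * b * y) := by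
      linear_combination (v * (y:ℚ)) * hA + ((q:ℚ) * b * y) * hU + (b * (v:ℚ)) * htQ
        + (b * (v:ℚ) * y) * hk
    exact_mod_cast keyQ
  by_cases hcase : a * v * (y:ℤ) = b * v
  · exfalso
    apply h
    have hay : a * (y:ℤ) = b := by
      have h5 : (a * (y:ℤ)) * v = b * v := by linear_combination hcase
      exact mul_right_cancel₀ hv_pos.ne' h5
    have hy_pos : (0:ℤ) < (y:ℤ) := by exact_mod_cast hy
    have ha_pos : 0 < a := by nlinarith
    have ha1 : a = 1 := by
      have hdvd : a.natAbs ∣ r.den := by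
        have hd : a ∣ b := ⟨(y:ℤ), hay.symm⟩
        have := Int.natAbs_dvd_natAbs.mpr hd
        simpa [hb_def] using this
      have h6 : a.natAbs = 1 := Nat.dvd_one.mp (r.reduced ▸ Nat.dvd_gcd dvd_rfl hdvd)
      omega
    have hyb : (y:ℤ) = b := by rw [ha1, one_mul] at hay; exact hay
    refine ⟨r.den, r.pos, ?_, t, ?_⟩
    · have h4 : r = (r.num : ℚ) / (r.den : ℚ) := (Rat.num_div_den r).symm
      rw [h4, show r.num = (1:ℤ) from ha1]
      norm_num
    · have haQ : (a:ℚ) = 1 := by exact_mod_cast ha1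
      have hyQ : ((y:ℕ) : ℚ) = (b:ℚ) := by exact_mod_cast hyb
      have hQ : ((b:ℚ) * s) * q = t * q := by
        linear_combination (b:ℚ) * hk + htQ + hA + (-(k:ℚ)) * hyQ - haQ
      have h7 : (b:ℚ) * s = t := mul_right_cancel₀ hq0 hQ
      rw [hb_def] at h7
      exact_mod_cast h7
  · have hne : a * v * (y:ℤ) - b * v ≠ 0 := sub_ne_zero.mpr hcase
    have hdvd : (q:ℤ) ∣ a * v * (y:ℤ) - b * v := ⟨_, key⟩
    have hle : (q:ℤ) ≤ |a * v * (y:ℤ) - b * v| :=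
      Int.le_of_dvd (abs_pos.mpr hne) ((dvd_abs _ _).mpr hdvd)
    have hy1 : (1:ℤ) ≤ (y:ℤ) := by exact_mod_cast hy
    have hbound : |a * v * (y:ℤ) - b * v| ≤ (|a| + b) * v * y := by
      have h2 : |a * v * (y:ℤ)| = |a| * v * y := by
        rw [abs_mul, abs_mul, abs_of_pos hv_pos, abs_of_pos (by exact_mod_cast hy : (0:ℤ) < (y:ℤ))]
      have h3 : |b * v| = b * v := abs_of_pos (by positivity)
      have h4 : b * v ≤ b * v * y := le_mul_of_one_le_right (by positivity) hy1
      calc |a * v * (y:ℤ) - b * v| ≤ |a * v * (y:ℤ)| + |b * v| := abs_sub _ _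
        _ = |a| * v * y + b * v := by rw [h2, h3]
        _ ≤ |a| * v * y + b * v * y := by linarith
        _ = (|a| + b) * v * y := by ring
    have hfin : (q:ℤ) ≤ (|a| + b) * v * y := le_trans hle hbound
    rw [inv_mul_le_iff₀ hC_pos]
    have hfinR : ((q:ℤ) : ℝ) ≤ (((|a| + b) * v * y : ℤ) : ℝ) := by exact_mod_cast hfin
    push_cast at hfinR ⊢
    linarith
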